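/- In misère Partizan Kayles, a position consisting of exactly k strips of length 1 and k strips of length 2 (k ≥ 1) has outcome N: whoever moves first wins. -/
import Mathlib


/-- Add a strip of length `k` to a position (strips of length 0 are discarded). -/
def addStrip (m : Multiset ℕ) (k : ℕ) : Multiset ℕ := if k = 0 then m else k ::ₘ m

/-- Left removes one square from a strip of length `n ≥ 1`, leaving strips `i` and `n-1-i`. -/
def LeftMove (G G' : Multiset ℕ) : Prop :=
  ∃ n ∈ G, ∃ i, i + 1 ≤ n ∧ G' = addStrip (addStrip (G.erase n) i) (n - 1 - i)

/-- Right removes two adjacent squares from a strip of length `n ≥ 2`, leaving `i` and `n-2-i`. -/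
def RightMove (G G' : Multiset ℕ) : Prop :=
  ∃ n ∈ G, ∃ i, i + 2 ≤ n ∧ G' = addStrip (addStrip (G.erase n) i) (n - 2 - i)

mutual
  /-- Misère play: Left, to move, wins (a player unable to move wins). -/
  inductive LeftWinsMover : Multiset ℕ → Prop
    | cannot (G : Multiset ℕ) : (¬ ∃ G', LeftMove G G') → LeftWinsMover G
    | move (G G' : Multiset ℕ) : LeftMove G G' → LeftWinsWaiter G' → LeftWinsMover G
  /-- Misère play: Left wins with Right to move. -/
  inductive LeftWinsWaiter : Multiset ℕ → Prop
    | intro (G : Multiset ℕ) : (∃ G', RightMove G G') →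
        (∀ G', RightMove G G' → LeftWinsMover G') → LeftWinsWaiter G
end

inductive Outcome | L | N | P | R
  deriving DecidableEq

open Classical in
/-- The misère outcome `o⁻(G)`. -/
noncomputable def outcome (G : Multiset ℕ) : Outcome :=
  if LeftWinsMover G then (if LeftWinsWaiter G then Outcome.L else Outcome.N)
  else (if LeftWinsWaiter G then Outcome.P else Outcome.R)

/-- The partial order on outcomes: `L` greatest, `R` least, `N` and `P` incomparable. -/
def Outcome.le (a b : Outcome) : Prop := a = b ∨ a = Outcome.R ∨ b = Outcome.L

/-- `pos k j` is the position `kS₁ + jS₂`. -/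
def pos (k j : ℕ) : Multiset ℕ := Multiset.replicate k 1 + Multiset.replicate j 2

lemma pos_succ_left (k j : ℕ) : pos (k+1) j = 1 ::ₘ pos k j := by
  simp [pos, Multiset.replicate_succ, Multiset.cons_add]

lemma pos_succ_right (k j : ℕ) : pos k (j+1) = 2 ::ₘ pos k j := by
  simp [pos, Multiset.replicate_succ]

lemma mem_pos {n k j : ℕ} : n ∈ pos k j ↔ (n = 1 ∧ 1 ≤ k) ∨ (n = 2 ∧ 1 ≤ j) := by
  simp only [pos, Multiset.mem_add, Multiset.mem_replicate]
  constructor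
  · rintro (⟨h, rfl⟩ | ⟨h, rfl⟩)
    · exact Or.inl ⟨rfl, by omega⟩
    · exact Or.inr ⟨rfl, by omega⟩
  · rintro (⟨rfl, h⟩ | ⟨rfl, h⟩)
    · exact Or.inl ⟨by omega, rfl⟩
    · exact Or.inr ⟨by omega, rfl⟩

lemma erase_one {k : ℕ} (j : ℕ) (hk : 1 ≤ k) : (pos k j).erase 1 = pos (k-1) j := by
  obtain ⟨k', rfl⟩ : ∃ k', k = k' + 1 := ⟨k - 1, by omega⟩
  rw [pos_succ_left, Multiset.erase_cons_head]
  simp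

lemma erase_two {j : ℕ} (k : ℕ) (hj : 1 ≤ j) : (pos k j).erase 2 = pos k (j-1) := by
  obtain ⟨j', rfl⟩ : ∃ j', j = j' + 1 := ⟨j - 1, by omega⟩
  rw [pos_succ_right, Multiset.erase_cons_head]
  simp

lemma addStrip_zero (m : Multiset ℕ) : addStrip m 0 = m := rfl

lemma addStrip_one (m : Multiset ℕ) : addStrip m 1 = 1 ::ₘ m := rfl

lemma leftMove_pos {k j : ℕ} {G' : Multiset ℕ} :
    LeftMove (pos k j) G' ↔
      (1 ≤ k ∧ G' = pos (k-1) j) ∨ (1 ≤ j ∧ G' = pos (k+1) (j-1)) := by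
  constructor
  · rintro ⟨n, hn, i, hi, rfl⟩
    rcases mem_pos.mp hn with ⟨rfl, hk⟩ | ⟨rfl, hj⟩
    · have hi0 : i = 0 := by omega
      subst hi0
      left
      exact ⟨hk, by rw [erase_one j hk]; rfl⟩
    · right
      refine ⟨hj, ?_⟩
      have : i = 0 ∨ i = 1 := by omega
      rcases this with rfl | rfl
      · rw [erase_two k hj]
        show addStrip (addStrip (pos k (j-1)) 0) 1 = _
        rw [addStrip_zero, addStrip_one, pos_succ_left]
      · rw [erase_two k hj]
        show addStrip (addStrip (pos k (j-1)) 1) 0 = _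
        rw [addStrip_one, addStrip_zero, pos_succ_left]
  · rintro (⟨hk, rfl⟩ | ⟨hj, rfl⟩)
    · exact ⟨1, mem_pos.mpr (Or.inl ⟨rfl, hk⟩), 0, by omega,
        by rw [erase_one j hk]; rfl⟩
    · refine ⟨2, mem_pos.mpr (Or.inr ⟨rfl, hj⟩), 0, by omega, ?_⟩
      rw [erase_two k hj]
      show _ = addStrip (addStrip (pos k (j-1)) 0) 1
      rw [addStrip_zero, addStrip_one, pos_succ_left]

lemma rightMove_pos {k j : ℕ} {G' : Multiset ℕ} :
    RightMove (pos k j) G' ↔ 1 ≤ j ∧ G' = pos k (j-1) := by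
  constructor
  · rintro ⟨n, hn, i, hi, rfl⟩
    rcases mem_pos.mp hn with ⟨rfl, hk⟩ | ⟨rfl, hj⟩
    · omega
    · have hi0 : i = 0 := by omega
      subst hi0
      exact ⟨hj, by rw [erase_two k hj]; rfl⟩
  · rintro ⟨hj, rfl⟩
    exact ⟨2, mem_pos.mpr (Or.inr ⟨rfl, hj⟩), 0, by omega,
      by rw [erase_two k hj]; rfl⟩

lemma kayles_char : ∀ N k j : ℕ, k + 2 * j = N →
    (LeftWinsMover (pos k j) ↔ k ≤ j ∧ (j - k) % 3 = 0) ∧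
    (LeftWinsWaiter (pos k j) ↔ k < j ∧ (j - 1 - k) % 3 = 0) := by
  intro N
  induction N using Nat.strong_induction_on with
  | _ N ih =>
    intro k j hkj
    constructor
    · constructor
      · intro hM
        cases hM with
        | cannot _ h =>
          have hk0 : k = 0 ∧ j = 0 := by
            by_contra h'
            apply h
            rcases Nat.lt_or_ge 0 k with hk | hk
            · exact ⟨pos (k-1) j, leftMove_pos.mpr (Or.inl ⟨hk, rfl⟩)⟩
            · have hj : 1 ≤ j := by omega
              exact ⟨pos (k+1) (j-1), leftMove_pos.mpr (Or.inr ⟨hj, rfl⟩)⟩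
          omega
        | move _ G' hmove hW =>
          rcases leftMove_pos.mp hmove with ⟨hk, rfl⟩ | ⟨hj, rfl⟩
          · have := ((ih ((k-1) + 2*j) (by omega) (k-1) j rfl).2).mp hW
            omega
          · have := ((ih ((k+1) + 2*(j-1)) (by omega) (k+1) (j-1) rfl).2).mp hW
            omega
      · rintro ⟨hle, h3⟩
        by_cases hkj0 : k = 0 ∧ j = 0
        · apply LeftWinsMover.cannot
          rintro ⟨G', hG'⟩
          rcases leftMove_pos.mp hG' with ⟨hk, _⟩ | ⟨hj, _⟩ <;> omega
        · rcases Nat.lt_or_ge 0 k with hk | hk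
          · refine LeftWinsMover.move _ (pos (k-1) j)
              (leftMove_pos.mpr (Or.inl ⟨hk, rfl⟩)) ?_
            exact ((ih ((k-1) + 2*j) (by omega) (k-1) j rfl).2).mpr ⟨by omega, by omega⟩
          · have hj : 1 ≤ j := by omega
            refine LeftWinsMover.move _ (pos (k+1) (j-1))
              (leftMove_pos.mpr (Or.inr ⟨hj, rfl⟩)) ?_
            exact ((ih ((k+1) + 2*(j-1)) (by omega) (k+1) (j-1) rfl).2).mpr
              ⟨by omega, by omega⟩
    · constructor
      · rintro ⟨_, ⟨G', hG'⟩, hall⟩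
        obtain ⟨hj, rfl⟩ := rightMove_pos.mp hG'
        have hM := hall _ (rightMove_pos.mpr ⟨hj, rfl⟩)
        have := ((ih (k + 2*(j-1)) (by omega) k (j-1) rfl).1).mp hM
        omega
      · rintro ⟨hkj', h3⟩
        have hj : 1 ≤ j := by omega
        refine LeftWinsWaiter.intro _ ⟨pos k (j-1), rightMove_pos.mpr ⟨hj, rfl⟩⟩ ?_
        intro G' hG'
        obtain ⟨_, rfl⟩ := rightMove_pos.mp hG'
        exact ((ih (k + 2*(j-1)) (by omega) k (j-1) rfl).1).mpr ⟨by omega, by omega⟩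

theorem kayles_equal_ones_twos (k : ℕ) (hk : 1 ≤ k) :
    outcome (pos k k) = Outcome.N := by
  obtain ⟨hM, hW⟩ := kayles_char (k + 2 * k) k k rfl
  have h1 : LeftWinsMover (pos k k) := hM.mpr ⟨le_refl k, by omega⟩
  have h2 : ¬ LeftWinsWaiter (pos k k) := fun h => by have := hW.mp h; omega
  rw [outcome, if_pos h1, if_neg h2]
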